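/- Let v ∈ ℝ^d satisfy (R⁻¹ v)_k < 0 for every k. Then for every proper subset A of {1,…,d} (so the complement A^c is nonempty), the submatrix R_{A,A} of R with rows and columns indexed by A is invertible, and there exists an index k ∈ A^c such that v_k + ((Pᵗ)_{A^c,A} (R_{A,A})^{-1} v_A)_k < 0, where v_A is the subvector of v indexed by A and (Pᵗ)_{A^c,A} is the submatrix of Pᵗ with rows indexed by A^c and columns indexed by A. -/

import Mathlib

open Matrix Filter

section Aux
open Finset

variable {d : ℕ} {I : Type*} [Fintype I] [DecidableEq I]

/-- powers of a nonneg matrix are nonneg -/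
lemma pow_entry_nonneg (Q : Matrix I I ℝ) (hQ : ∀ i j, 0 ≤ Q i j) :
    ∀ n i j, 0 ≤ (Q ^ n) i j := by
  intro n
  induction n with
  | zero => intro i j; rw [pow_zero, Matrix.one_apply]; positivity
  | succ n ih =>
      intro i j
      rw [pow_succ, Matrix.mul_apply]
      exact Finset.sum_nonneg fun c _ => mul_nonneg (ih i c) (hQ c j)

/-- `1 - Q` is a unit if `Q ^ n → 0`. -/
lemma isUnit_one_sub (Q : Matrix I I ℝ)
    (hQn : Tendsto (fun n => Q ^ n) atTop (nhds 0)) : IsUnit (1 - Q) := by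
  have h1 : Tendsto (fun n => (1 : Matrix I I ℝ) - Q ^ n) atTop (nhds 1) := by
    simpa using tendsto_const_nhds.sub hQn
  have hdet : Tendsto (fun n => ((1 : Matrix I I ℝ) - Q ^ n).det) atTop (nhds 1) := by
    have hc : Continuous fun M : Matrix I I ℝ => M.det := continuous_id.matrix_det
    simpa [Function.comp_def] using (hc.tendsto 1).comp h1
  obtain ⟨N, hN⟩ := (hdet.eventually_ne one_ne_zero).exists
  have hB : IsUnit ((1 : Matrix I I ℝ) - Q ^ N).det := isUnit_iff_ne_zero.2 hN
  have hgeom : (1 - Q) * (∑ i ∈ Finset.range N, Q ^ i) = 1 - Q ^ N := by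
    have := mul_geom_sum Q N
    rw [← neg_sub Q 1, neg_mul, this, neg_sub]
  have key : (1 - Q) * ((∑ i ∈ Finset.range N, Q ^ i) * ((1 : Matrix I I ℝ) - Q ^ N)⁻¹) = 1 := by
    rw [← Matrix.mul_assoc, hgeom, Matrix.mul_nonsing_inv _ hB]
  letI := invertibleOfRightInverse _ _ key
  exact isUnit_of_invertible _

lemma inv_one_sub_nonneg (Q : Matrix (Fin d) (Fin d) ℝ) (hQ : ∀ i j, 0 ≤ Q i j)
    (hQn : Tendsto (fun n => Q ^ n) atTop (nhds 0)) : ∀ i j, 0 ≤ (1 - Q)⁻¹ i j := by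
  have hu : IsUnit (1 - Q) := isUnit_one_sub Q hQn
  have hud : IsUnit ((1 : Matrix (Fin d) (Fin d) ℝ) - Q).det := (Matrix.isUnit_iff_isUnit_det _).1 hu
  have hS : ∀ N, (∑ i ∈ Finset.range N, Q ^ i) = (1 - Q)⁻¹ * (1 - (1 - (1 - Q)) ^ N) := by
    intro N
    have hgeom : (1 - Q) * (∑ i ∈ Finset.range N, Q ^ i) = 1 - Q ^ N := by
      have := mul_geom_sum Q N
      rw [← neg_sub Q 1, neg_mul, this, neg_sub]
    have := congrArg (fun M => (1 - Q)⁻¹ * M) hgeom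
    simp only [← Matrix.mul_assoc] at this
    rw [Matrix.nonsing_inv_mul _ hud, Matrix.one_mul] at this
    simpa using this
  have hlim : Tendsto (fun N => (∑ i ∈ Finset.range N, Q ^ i)) atTop (nhds ((1 - Q)⁻¹)) := by
    have hc : Continuous fun M : Matrix (Fin d) (Fin d) ℝ => (1 - Q)⁻¹ * M :=
      continuous_const.matrix_mul continuous_id
    have h1 : Tendsto (fun N => (1 : Matrix (Fin d) (Fin d) ℝ) - Q ^ N) atTop (nhds 1) := by
      simpa using tendsto_const_nhds.sub hQn
    have := (hc.tendsto 1).comp h1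
    simp only [Function.comp_def] at this
    have h2 : (1 - Q)⁻¹ * (1 : Matrix (Fin d) (Fin d) ℝ) = (1 - Q)⁻¹ := Matrix.mul_one _
    rw [h2] at this
    convert this using 2 with N
    rw [hS N]
    simp
  intro i j
  have hentry : Tendsto (fun N => (∑ k ∈ Finset.range N, Q ^ k) i j) atTop (nhds ((1 - Q)⁻¹ i j)) := by
    have := (tendsto_pi_nhds.1 hlim i)
    exact tendsto_pi_nhds.1 this j
  refine ge_of_tendsto' hentry fun N => ?_
  rw [Matrix.sum_apply]
  exact Finset.sum_nonneg fun k _ => pow_entry_nonneg Q hQ k i j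

lemma submatrix_pow_le {ι : Type*} [Fintype ι] [DecidableEq ι]
    (Q : Matrix (Fin d) (Fin d) ℝ) (hQ : ∀ i j, 0 ≤ Q i j)
    (f : ι → Fin d) (hf : Function.Injective f) :
    ∀ n a b, ((Q.submatrix f f) ^ n) a b ≤ (Q ^ n) (f a) (f b) := by
  intro n
  induction n with
  | zero =>
      intro a b
      by_cases h : a = b
      · simp [h, Matrix.one_apply]
      · have hne : f a ≠ f b := fun hfe => h (hf hfe)
        simp [Matrix.one_apply, h, hne]
  | succ n ih =>
      intro a b
      rw [pow_succ, pow_succ, Matrix.mul_apply, Matrix.mul_apply]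
      have step1 : ∑ c : ι, ((Q.submatrix f f) ^ n) a c * (Q.submatrix f f) c b
          ≤ ∑ c : ι, (Q ^ n) (f a) (f c) * Q (f c) (f b) := by
        refine Finset.sum_le_sum fun c _ => ?_
        have h1 := ih a c
        have h2 : (Q.submatrix f f) c b = Q (f c) (f b) := rfl
        have hnn : 0 ≤ ((Q.submatrix f f) ^ n) a c :=
          pow_entry_nonneg (Q.submatrix f f) (fun i j => hQ _ _) n a c
        rw [h2]
        exact mul_le_mul_of_nonneg_right h1 (hQ _ _) |>.trans
          (le_of_eq rfl) |>.trans (le_refl _) |>.trans (le_refl _)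
      refine step1.trans ?_
      have himg : ∑ c : ι, (Q ^ n) (f a) (f c) * Q (f c) (f b)
          = ∑ j ∈ Finset.univ.image f, (Q ^ n) (f a) j * Q j (f b) := by
        rw [Finset.sum_image (fun x _ y _ h => hf h)]
      rw [himg]
      refine Finset.sum_le_sum_of_subset_of_nonneg (Finset.subset_univ _) fun j _ _ => ?_
      exact mul_nonneg (pow_entry_nonneg Q hQ n _ _) (hQ _ _)

lemma submatrix_pow_tendsto {ι : Type*} [Fintype ι] [DecidableEq ι]
    (Q : Matrix (Fin d) (Fin d) ℝ) (hQ : ∀ i j, 0 ≤ Q i j)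
    (f : ι → Fin d) (hf : Function.Injective f)
    (hQn : Tendsto (fun n => Q ^ n) atTop (nhds 0)) :
    Tendsto (fun n => (Q.submatrix f f) ^ n) atTop (nhds 0) := by
  refine tendsto_pi_nhds.2 ?_
  intro a
  rw [tendsto_pi_nhds]
  intro b
  have hentry : Tendsto (fun n => (Q ^ n) (f a) (f b)) atTop (nhds 0) := by
    have h1 := tendsto_pi_nhds.1 hQn (f a)
    have := tendsto_pi_nhds.1 h1 (f b)
    simpa using this
  have h0 : ∀ n, (0 : ℝ) ≤ ((Q.submatrix f f) ^ n) a b :=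
    fun n => pow_entry_nonneg (Q.submatrix f f) (fun i j => hQ _ _) n a b
  have hle : ∀ n, ((Q.submatrix f f) ^ n) a b ≤ (Q ^ n) (f a) (f b) :=
    fun n => submatrix_pow_le Q hQ f hf n a b
  have : Tendsto (fun n => ((Q.submatrix f f) ^ n) a b) atTop (nhds 0) :=
    squeeze_zero h0 hle hentry
  simpa using this

end Aux

/-- linear-algebra core of Lemma 5.1: if `R⁻¹ v < 0` entrywise, then for every
proper subset `A` of the coordinates, the principal submatrix `R_{A,A}` is invertible and
there is a coordinate `k ∉ A` with `v_k + ((Pᵗ)_{Aᶜ,A} (R_{A,A})⁻¹ v_A)_k < 0`. -/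
theorem modified_drift_negative (d : ℕ) (hd : 2 ≤ d)
    (P : Matrix (Fin d) (Fin d) ℝ) (hP : ∀ k l, 0 ≤ P k l)
    (hPn : Tendsto (fun n => P ^ n) atTop (nhds 0))
    (R : Matrix (Fin d) (Fin d) ℝ) (hR : R = 1 - Pᵀ)
    (v : Fin d → ℝ) (hv : ∀ k, (R⁻¹ *ᵥ v) k < 0)
    (A : Finset (Fin d)) (hA : A ≠ Finset.univ) :
    IsUnit (R.submatrix (fun a : {x : Fin d // x ∈ A} => (a : Fin d))
      (fun a : {x : Fin d // x ∈ A} => (a : Fin d))) ∧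
    ∃ k : {x : Fin d // x ∉ A},
      v (k : Fin d) +
        ((Pᵀ).submatrix (fun b : {x : Fin d // x ∉ A} => (b : Fin d))
            (fun a : {x : Fin d // x ∈ A} => (a : Fin d)) *ᵥ
          ((R.submatrix (fun a : {x : Fin d // x ∈ A} => (a : Fin d))
              (fun a : {x : Fin d // x ∈ A} => (a : Fin d)))⁻¹ *ᵥ
            (fun a : {x : Fin d // x ∈ A} => v (a : Fin d)))) k < 0 := by
  classical
  set Q : Matrix (Fin d) (Fin d) ℝ := Pᵀ with hQdef
  have hQ : ∀ i j, 0 ≤ Q i j := fun i j => hP j i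
  have hQn : Tendsto (fun n => Q ^ n) atTop (nhds 0) := by
    have hc : Continuous fun M : Matrix (Fin d) (Fin d) ℝ => Mᵀ :=
      continuous_id.matrix_transpose
    have h0 := (hc.tendsto 0).comp hPn
    rw [Matrix.transpose_zero] at h0
    exact h0.congr fun n => Matrix.transpose_pow P n
  have hRQ : R = 1 - Q := hR
  -- invertibility and nonnegativity of R⁻¹
  have hRunit : IsUnit R := hRQ ▸ isUnit_one_sub Q hQn
  have hRdet : IsUnit R.det := (Matrix.isUnit_iff_isUnit_det R).1 hRunit
  have hRinv_nonneg : ∀ i j, 0 ≤ R⁻¹ i j := by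
    rw [hRQ]; exact inv_one_sub_nonneg Q hQ hQn
  -- the submatrix
  set f : {x : Fin d // x ∈ A} → Fin d := fun a => (a : Fin d) with hfdef
  have hf : Function.Injective f := Subtype.coe_injective
  have hsub : R.submatrix f f = 1 - Q.submatrix f f := by
    rw [hRQ]
    ext a b
    simp only [Matrix.submatrix_apply, Matrix.sub_apply, Matrix.one_apply, hf.eq_iff]
  have hunit : IsUnit (R.submatrix f f) := by
    rw [hsub]
    exact isUnit_one_sub _ (submatrix_pow_tendsto Q hQ f hf hQn)
  have hdetA : IsUnit (R.submatrix f f).det := (Matrix.isUnit_iff_isUnit_det _).1 hunit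
  refine ⟨hunit, ?_⟩
  by_contra hcon
  push_neg at hcon
  -- notation
  set u : {x : Fin d // x ∈ A} → ℝ :=
    (R.submatrix f f)⁻¹ *ᵥ (fun a : {x : Fin d // x ∈ A} => v (a : Fin d)) with hudef
  have hRAu : (R.submatrix f f) *ᵥ u = fun a : {x : Fin d // x ∈ A} => v (a : Fin d) := by
    rw [hudef, Matrix.mulVec_mulVec, Matrix.mul_nonsing_inv _ hdetA, Matrix.one_mulVec]
  set x : Fin d → ℝ := fun j => if h : j ∈ A then u ⟨j, h⟩ else 0 with hxdef
  set w : Fin d → ℝ := R⁻¹ *ᵥ v with hwdef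
  have hRw : R *ᵥ w = v := by
    rw [hwdef, Matrix.mulVec_mulVec, Matrix.mul_nonsing_inv _ hRdet, Matrix.one_mulVec]
  -- key sum computation
  have hsum : ∀ j : Fin d, (R *ᵥ x) j = ∑ a : {x : Fin d // x ∈ A}, R j (a : Fin d) * u a := by
    intro j
    have h1 : (R *ᵥ x) j = ∑ i : Fin d, R j i * x i := by
      rw [Matrix.mulVec, dotProduct]
    have h2 : ∑ i : Fin d, R j i * x i = ∑ i ∈ A, R j i * x i := by
      refine (Finset.sum_subset (Finset.subset_univ A) fun i _ hi => ?_).symm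
      simp [hxdef, hi]
    have h3 : ∑ i ∈ A, R j i * x i = ∑ a : {x : Fin d // x ∈ A}, R j (a : Fin d) * x (a : Fin d) :=
      (Finset.sum_coe_sort A (fun i => R j i * x i)).symm
    have h4 : ∀ a : {x : Fin d // x ∈ A}, x (a : Fin d) = u a := by
      intro a; simp [hxdef, a.2]
    rw [h1, h2, h3]
    exact Finset.sum_congr rfl fun a _ => by rw [h4 a]
  -- on A coordinates, R *ᵥ x agrees with v
  have hxA : ∀ a : {x : Fin d // x ∈ A}, (R *ᵥ x) (a : Fin d) = v (a : Fin d) := by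
    intro a
    have h5 : ((R.submatrix f f) *ᵥ u) a = ∑ b : {x : Fin d // x ∈ A}, R (a : Fin d) (b : Fin d) * u b := by
      rw [Matrix.mulVec, dotProduct]; rfl
    have := congrFun hRAu a
    rw [h5] at this
    rw [hsum]
    exact this
  -- on A^c coordinates, R *ᵥ x equals minus the modified drift correction
  have hxAc : ∀ k : {x : Fin d // x ∉ A},
      (R *ᵥ x) (k : Fin d) =
        -(((Pᵀ).submatrix (fun b : {x : Fin d // x ∉ A} => (b : Fin d)) f *ᵥ u) k) := by
    intro k
    rw [hsum]
    have h6 : ((Pᵀ).submatrix (fun b : {x : Fin d // x ∉ A} => (b : Fin d)) f *ᵥ u) k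
        = ∑ a : {x : Fin d // x ∈ A}, Q (k : Fin d) (a : Fin d) * u a := by
      rw [Matrix.mulVec, dotProduct]; rfl
    rw [h6, ← Finset.sum_neg_distrib]
    refine Finset.sum_congr rfl fun a _ => ?_
    have hne : (k : Fin d) ≠ (a : Fin d) := by
      intro h; exact k.2 (h ▸ a.2)
    have h7 : R (k : Fin d) (a : Fin d) = -Q (k : Fin d) (a : Fin d) := by
      rw [hRQ]; simp [Matrix.sub_apply, Matrix.one_apply, hne]
    rw [h7]; ring
  -- the vector y = v - R x is nonnegative
  set y : Fin d → ℝ := fun j => v j - (R *ᵥ x) j with hydef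
  have hy : ∀ j, 0 ≤ y j := by
    intro j
    by_cases h : j ∈ A
    · have := hxA ⟨j, h⟩
      simp only [hydef]
      rw [this]; simp
    · have h8 := hcon ⟨j, h⟩
      have h9 := hxAc ⟨j, h⟩
      simp only [hydef]
      rw [h9]
      have : v j + ((Pᵀ).submatrix (fun b : {x : Fin d // x ∉ A} => (b : Fin d)) f *ᵥ u) ⟨j, h⟩ =
          v j - -(((Pᵀ).submatrix (fun b : {x : Fin d // x ∉ A} => (b : Fin d)) f *ᵥ u) ⟨j, h⟩) := by ring
      rw [← this]
      exact h8
  -- w - x = R⁻¹ y is nonnegative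
  have hwx : w - x = R⁻¹ *ᵥ y := by
    have h10 : y = R *ᵥ (w - x) := by
      funext j
      rw [Matrix.mulVec_sub]
      simp only [hydef, Pi.sub_apply]
      rw [hRw]
    rw [h10, Matrix.mulVec_mulVec, Matrix.nonsing_inv_mul _ hRdet, Matrix.one_mulVec]
  have hwx_nonneg : ∀ j, 0 ≤ (w - x) j := by
    intro j
    rw [hwx]
    rw [Matrix.mulVec, dotProduct]
    exact Finset.sum_nonneg fun i _ => mul_nonneg (hRinv_nonneg j i) (hy i)
  -- contradiction at a coordinate outside A
  have hex : ∃ k0, k0 ∉ A := by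
    by_contra h
    push_neg at h
    exact hA (Finset.eq_univ_iff_forall.2 h)
  obtain ⟨k0, hk0⟩ := hex
  have h11 := hwx_nonneg k0
  have h12 : x k0 = 0 := by simp [hxdef, hk0]
  have h13 : w k0 < 0 := hv k0
  rw [Pi.sub_apply, h12, sub_zero] at h11
  linarith
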